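/- Fix j ∈ ℝ⁴ and let g be a symmetric invertible 4×4 real matrix with det g < 0 and jᵀ g j < 0. Define n(g) = √(− Σ_{μν} g_{μν} j^μ j^ν)/√(−det g) and u^μ = j^μ/(√(−det g) · n(g)). Then for every symmetric 4×4 matrix H, the directional derivative of n at g in direction H is (d/dt)|_{t=0} n(g + tH) = −(1/2) n(g) Σ_{μν} ((g⁻¹)^{μν} + u^μ u^ν) H_{μν}. -/

import Mathlib

open scoped BigOperators

/-- The rest mole density `n(g) = √(−Σ g_{μν} j^μ j^ν)/√(−det g)`. -/
noncomputable def nOf (j : Fin 4 → ℝ) (g : Matrix (Fin 4) (Fin 4) ℝ) : ℝ :=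
  Real.sqrt (-(∑ μ, ∑ ν, g μ ν * j μ * j ν)) / Real.sqrt (-g.det)

/-- The four-velocity `u^μ = j^μ/(√(−det g) n(g))`. -/
noncomputable def uOf (j : Fin 4 → ℝ) (g : Matrix (Fin 4) (Fin 4) ℝ) (μ : Fin 4) : ℝ :=
  j μ / (Real.sqrt (-g.det) * nOf j g)

/-- Variation of the rest mole density with respect to the metric:
for every symmetric direction `H`,
`(d/dt)|₀ n(g + tH) = −(1/2) n(g) Σ_{μν} ((g⁻¹)^{μν} + u^μ u^ν) H_{μν}`. -/
theorem variation_of_rest_density (j : Fin 4 → ℝ) (g : Matrix (Fin 4) (Fin 4) ℝ)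
    (hsymm : g.IsSymm) (hinv : IsUnit g.det) (hdet : g.det < 0)
    (htl : ∑ μ, ∑ ν, g μ ν * j μ * j ν < 0)
    (H : Matrix (Fin 4) (Fin 4) ℝ) (hH : H.IsSymm) :
    deriv (fun t : ℝ => nOf j (g + t • H)) 0
      = -(1 / 2) * nOf j g * ∑ μ, ∑ ν, (g⁻¹ μ ν + uOf j g μ * uOf j g ν) * H μ ν := by
  classical
  set M : Matrix (Fin 4) (Fin 4) ℝ := g⁻¹ * H with hM
  set a : ℝ := M.trace with ha
  set P : Polynomial ℝ :=
    (Matrix.det (1 + (Polynomial.X : Polynomial ℝ) • M.map Polynomial.C)).divX.divX with hP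
  set Q0 : ℝ := ∑ μ, ∑ ν, g μ ν * j μ * j ν with hQ0
  set QH : ℝ := ∑ μ, ∑ ν, H μ ν * j μ * j ν with hQH
  -- determinant expansion
  have hdetexp : ∀ t : ℝ, (g + t • H).det = g.det * (1 + a * t + P.eval t * t ^ 2) := by
    intro t
    have hfact : g + t • H = g * (1 + t • M) := by
      rw [hM, Matrix.mul_add, mul_one, Matrix.mul_smul, ← Matrix.mul_assoc,
        Matrix.mul_nonsing_inv g hinv, Matrix.one_mul]
    rw [hfact, Matrix.det_mul, Matrix.det_one_add_smul t M]
  -- quadratic form expansion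
  have hQexp : ∀ t : ℝ, (∑ μ, ∑ ν, (g + t • H) μ ν * j μ * j ν) = Q0 + t * QH := by
    intro t
    rw [hQ0, hQH, Finset.mul_sum, ← Finset.sum_add_distrib]
    refine Finset.sum_congr rfl fun μ _ => ?_
    rw [Finset.mul_sum, ← Finset.sum_add_distrib]
    refine Finset.sum_congr rfl fun ν _ => ?_
    simp [Matrix.add_apply, Matrix.smul_apply, smul_eq_mul]
    ring
  -- the function rewritten
  have hfun : (fun t : ℝ => nOf j (g + t • H))
      = fun t : ℝ => Real.sqrt (-(Q0 + t * QH))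
          / Real.sqrt (-(g.det * (1 + a * t + P.eval t * t ^ 2))) := by
    funext t
    rw [nOf, hQexp t, hdetexp t]
  -- positivity facts
  have hA0 : (0:ℝ) < -Q0 := by linarith
  have hB0 : (0:ℝ) < -g.det := by linarith
  set sA : ℝ := Real.sqrt (-Q0) with hsA
  set sB : ℝ := Real.sqrt (-g.det) with hsB
  have hsApos : 0 < sA := Real.sqrt_pos.mpr hA0
  have hsBpos : 0 < sB := Real.sqrt_pos.mpr hB0
  have hsAsq : sA ^ 2 = -Q0 := Real.sq_sqrt hA0.le
  have hsBsq : sB ^ 2 = -g.det := Real.sq_sqrt hB0.le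
  -- derivative of numerator
  have hAder : HasDerivAt (fun t : ℝ => -(Q0 + t * QH)) (-QH) 0 := by
    have : HasDerivAt (fun t : ℝ => Q0 + t * QH) QH 0 := by
      simpa using ((hasDerivAt_id (0:ℝ)).mul_const QH).const_add Q0
    simpa using this.fun_neg
  have hNum : HasDerivAt (fun t : ℝ => Real.sqrt (-(Q0 + t * QH)))
      (1 / (2 * sA) * (-QH)) 0 := by
    have h0 : -(Q0 + (0:ℝ) * QH) ≠ 0 := by simpa using hA0.ne'
    have := (Real.hasDerivAt_sqrt h0).comp 0 hAder
    simpa [hsA, Function.comp_def] using this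
  -- derivative of the inner det polynomial
  have hfder : HasDerivAt (fun t : ℝ => 1 + a * t + P.eval t * t ^ 2) a 0 := by
    have h1 : HasDerivAt (fun t : ℝ => 1 + a * t) a 0 := by
      simpa using ((hasDerivAt_id (0:ℝ)).const_mul a).const_add 1
    have h2 : HasDerivAt (fun t : ℝ => P.eval t * t ^ 2)
        (Polynomial.eval 0 (Polynomial.derivative P) * 0 ^ 2
          + P.eval 0 * (2 * 0 ^ 1)) 0 :=
      (P.hasDerivAt 0).mul (hasDerivAt_pow 2 0)
    have := h1.fun_add h2
    simpa using this
  have hBder : HasDerivAt (fun t : ℝ => -(g.det * (1 + a * t + P.eval t * t ^ 2)))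
      (-(g.det * a)) 0 := by
    simpa using (hfder.const_mul g.det).fun_neg
  have hB0eq : -(g.det * (1 + a * (0:ℝ) + P.eval 0 * (0:ℝ) ^ 2)) = -g.det := by ring_nf
  have hDen : HasDerivAt (fun t : ℝ => Real.sqrt (-(g.det * (1 + a * t + P.eval t * t ^ 2))))
      (1 / (2 * sB) * (-(g.det * a))) 0 := by
    have h0 : -(g.det * (1 + a * (0:ℝ) + P.eval 0 * (0:ℝ) ^ 2)) ≠ 0 := by
      rw [hB0eq]; exact hB0.ne'
    have := (Real.hasDerivAt_sqrt h0).comp 0 hBder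
    simpa [hsB, hB0eq, Function.comp_def] using this
  have hsB0 : Real.sqrt (-(g.det * (1 + a * (0:ℝ) + P.eval 0 * (0:ℝ) ^ 2))) ≠ 0 := by
    rw [hB0eq]; exact hsBpos.ne'
  have hDiv := hNum.fun_div hDen hsB0
  have hderiv : deriv (fun t : ℝ => nOf j (g + t • H)) 0
      = (1 / (2 * sA) * (-QH) * sB - sA * (1 / (2 * sB) * (-(g.det * a)))) / sB ^ 2 := by
    rw [hfun]
    have := hDiv.deriv
    rw [this]
    rw [hB0eq]
    norm_num [hsA, hsB]
  -- identify the RHS sum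
  have hginvsymm : (g⁻¹).IsSymm := by
    rw [Matrix.IsSymm, Matrix.transpose_nonsing_inv, hsymm.eq]
  have htrace : (∑ μ, ∑ ν, g⁻¹ μ ν * H μ ν) = a := by
    rw [ha, hM, Matrix.trace]
    simp only [Matrix.diag, Matrix.mul_apply]
    rw [Finset.sum_comm]
    refine Finset.sum_congr rfl fun μ _ => Finset.sum_congr rfl fun ν _ => ?_
    rw [hginvsymm.apply μ ν, mul_comm]
  have hnOf : nOf j g = sA / sB := rfl
  have huu : ∀ μ ν, uOf j g μ * uOf j g ν * H μ ν = j μ * j ν * H μ ν / (-Q0) := by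
    intro μ ν
    rw [uOf, uOf, hnOf]
    have : sB * (sA / sB) = sA := by field_simp
    rw [this]
    rw [div_mul_div_comm, ← hsAsq]
    ring
  have hsum : (∑ μ, ∑ ν, (g⁻¹ μ ν + uOf j g μ * uOf j g ν) * H μ ν)
      = a + QH / (-Q0) := by
    have : (∑ μ, ∑ ν, (g⁻¹ μ ν + uOf j g μ * uOf j g ν) * H μ ν)
        = (∑ μ, ∑ ν, g⁻¹ μ ν * H μ ν) + ∑ μ, ∑ ν, uOf j g μ * uOf j g ν * H μ ν := by
      rw [← Finset.sum_add_distrib]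
      refine Finset.sum_congr rfl fun μ _ => ?_
      rw [← Finset.sum_add_distrib]
      exact Finset.sum_congr rfl fun ν _ => by ring
    rw [this, htrace]
    congr 1
    rw [hQH, Finset.sum_div]
    refine Finset.sum_congr rfl fun μ _ => ?_
    rw [Finset.sum_div]
    refine Finset.sum_congr rfl fun ν _ => ?_
    rw [huu μ ν]; ring
  rw [hderiv, hsum, hnOf]
  have hdetg : g.det = -sB ^ 2 := by rw [hsBsq]; ring
  have hQ0' : Q0 = -sA ^ 2 := by rw [hsAsq]; ring
  rw [hdetg, hQ0']
  field_simp
  ring
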